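/- arXiv:1611.04924 — 2 statements merged into one kernel-verified Lean document; each statement's English description precedes it below -/
import Mathlib

section
/- (Lemma 1 of the paper) Let L be a real symmetric block matrix [[L₁₁, L₁₂],[L₁₂ᵀ, L₂₂]] with L₁₁ positive definite, and suppose L/L₁₁ + δI is positive semidefinite for some δ > 0. Set L' = L + δI with blocks L'₁₁ = L₁₁ + δI, L'₂₂ = L₂₂ + δI, L'₁₂ = L₁₂. Then the Schur complement L'/L'₁₁ = L'₂₂ − L₁₂ᵀ (L'₁₁)⁻¹ L₁₂ is positive semidefinite. -/
open Matrix

private lemma psd_smul {n : ℕ} {M : Matrix (Fin n) (Fin n) ℝ} (hM : M.PosSemidef)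
    {c : ℝ} (hc : 0 ≤ c) : (c • M).PosSemidef := by
  refine ⟨by unfold Matrix.IsHermitian at *; rw [conjTranspose_smul, hM.1]; simp, fun x => ?_⟩
  convert mul_nonneg hc (hM.2 x) using 1
  simp only [Finsupp.sum, Finset.mul_sum, Matrix.smul_apply, smul_eq_mul]
  exact Finset.sum_congr rfl fun i _ => Finset.sum_congr rfl fun j _ => by ring

theorem stmt_12 (n₁ n₂ : ℕ) (A : Matrix (Fin n₁) (Fin n₁) ℝ)
    (B : Matrix (Fin n₁) (Fin n₂) ℝ) (C : Matrix (Fin n₂) (Fin n₂) ℝ)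
    (hA : A.PosDef) (hC : C.IsSymm) (δ : ℝ) (hδ : 0 < δ)
    (hS : (C - Bᵀ * A⁻¹ * B + δ • (1 : Matrix (Fin n₂) (Fin n₂) ℝ)).PosSemidef) :
    ((C + δ • (1 : Matrix (Fin n₂) (Fin n₂) ℝ)) -
      Bᵀ * (A + δ • (1 : Matrix (Fin n₁) (Fin n₁) ℝ))⁻¹ * B).PosSemidef := by
  set I₁ : Matrix (Fin n₁) (Fin n₁) ℝ := 1 with hI₁
  have hδ1 : (δ • I₁).PosSemidef := by
    rw [hI₁, smul_one_eq_diagonal]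
    exact posSemidef_diagonal_iff.mpr fun i => hδ.le
  have hA' : (A + δ • I₁).PosDef := hA.add_posSemidef hδ1
  have hdA : IsUnit A.det := hA.det_pos.ne'.isUnit
  have hdA' : IsUnit (A + δ • I₁).det := hA'.det_pos.ne'.isUnit
  set M : Matrix (Fin n₁) (Fin n₁) ℝ := A * (A + δ • I₁) with hMdef
  have hMeq : M = A * A + δ • A := by
    rw [hMdef, mul_add, mul_smul_comm, hI₁, mul_one]
  have hMpsd : M.PosSemidef := by
    rw [hMeq]
    have h2 : (A * A).PosSemidef := by
      have := hA.posSemidef.pow 2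
      rwa [pow_two] at this
    exact h2.add (psd_smul hA.posSemidef hδ.le)
  have hMinv : M⁻¹ = (A + δ • I₁)⁻¹ * A⁻¹ := by
    rw [hMdef, Matrix.mul_inv_rev]
  -- key identity
  have key : A⁻¹ - (A + δ • I₁)⁻¹ = δ • M⁻¹ := by
    have h1 : (A + δ • I₁) * (A⁻¹ - (A + δ • I₁)⁻¹) = δ • A⁻¹ := by
      rw [mul_sub, Matrix.mul_nonsing_inv _ hdA', add_mul,
        Matrix.mul_nonsing_inv _ hdA, hI₁, Matrix.smul_mul, one_mul]
      abel
    calc A⁻¹ - (A + δ • I₁)⁻¹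
        = (A + δ • I₁)⁻¹ * ((A + δ • I₁) * (A⁻¹ - (A + δ • I₁)⁻¹)) := by
          rw [← mul_assoc, Matrix.nonsing_inv_mul _ hdA', one_mul]
      _ = δ • M⁻¹ := by rw [h1, hMinv, mul_smul_comm]
  have hBpsd : (Bᵀ * (δ • M⁻¹) * B).PosSemidef := by
    have := (psd_smul hMpsd.inv hδ.le).conjTranspose_mul_mul_same B
    simpa using this
  have hfinal : (C + δ • (1 : Matrix (Fin n₂) (Fin n₂) ℝ)) -
      Bᵀ * (A + δ • I₁)⁻¹ * B
      = (C - Bᵀ * A⁻¹ * B + δ • (1 : Matrix (Fin n₂) (Fin n₂) ℝ))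
        + Bᵀ * (δ • M⁻¹) * B := by
    rw [← key, Matrix.mul_sub, Matrix.sub_mul]
    abel
  rw [hfinal]
  exact hS.add hBpsd
end

section
/- Let L be a real symmetric matrix in block form [[L₁₁, L₁₂],[L₁₂ᵀ, L₂₂]]. Let κ ≤ 0 be strictly less than the smallest eigenvalue of L₁₁ (so 𝓛₁₁ := L₁₁ − κI is positive definite), and let η ≤ 0 be a lower bound on the eigenvalues of the Schur complement 𝓛/𝓛₁₁ of the shifted matrix 𝓛 = L − κI. Then κ + η is a lower bound for the smallest eigenvalue of L; i.e., L − (κ + η)I is positive semidefinite. -/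
open Matrix

theorem stmt_14 (n₁ n₂ : ℕ) (A : Matrix (Fin n₁) (Fin n₁) ℝ)
    (B : Matrix (Fin n₁) (Fin n₂) ℝ) (C : Matrix (Fin n₂) (Fin n₂) ℝ)
    (hA : A.IsSymm) (hC : C.IsSymm)
    (κ η : ℝ) (hκ : κ ≤ 0) (hη : η ≤ 0)
    (hApd : (A - κ • (1 : Matrix (Fin n₁) (Fin n₁) ℝ)).PosDef)
    (hS : ((C - κ • (1 : Matrix (Fin n₂) (Fin n₂) ℝ)) -
        Bᵀ * (A - κ • (1 : Matrix (Fin n₁) (Fin n₁) ℝ))⁻¹ * B -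
        η • (1 : Matrix (Fin n₂) (Fin n₂) ℝ)).PosSemidef) :
    (Matrix.fromBlocks A B Bᵀ C -
      (κ + η) • (1 : Matrix (Fin n₁ ⊕ Fin n₂) (Fin n₁ ⊕ Fin n₂) ℝ)).PosSemidef := by
  set A' := A - κ • (1 : Matrix (Fin n₁) (Fin n₁) ℝ) with hA'
  haveI : Invertible A' := hApd.isUnit.invertible
  have hM1 : (fromBlocks A' B Bᵀ (C - (κ + η) • 1)).PosSemidef := by
    rw [show Bᵀ = Bᴴ from (conjTranspose_eq_transpose_of_trivial B).symm]
    rw [Matrix.PosDef.fromBlocks₁₁ B _ hApd]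
    have : C - (κ + η) • (1 : Matrix (Fin n₂) (Fin n₂) ℝ) - Bᴴ * A'⁻¹ * B =
        (C - κ • 1) - Bᵀ * A'⁻¹ * B - η • 1 := by
      rw [conjTranspose_eq_transpose_of_trivial, add_smul]
      abel
    rw [this]
    exact hS
  have hP : ((-η) • fromBlocks (1 : Matrix (Fin n₁) (Fin n₁) ℝ) 0 0
      (0 : Matrix (Fin n₂) (Fin n₂) ℝ)).PosSemidef := by
    rw [Matrix.posSemidef_iff_dotProduct_mulVec]
    constructor
    · ext (i|i) (j|j) <;> simp only [Matrix.IsHermitian, conjTranspose_apply, Matrix.smul_apply, fromBlocks_apply₁₁, fromBlocks_apply₁₂, fromBlocks_apply₂₁, fromBlocks_apply₂₂, Matrix.one_apply, Matrix.zero_apply, star_trivial, smul_eq_mul, eq_comm] <;> first | (split_ifs <;> ring) | ring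
    · intro x
      have hmv : (fromBlocks (1 : Matrix (Fin n₁) (Fin n₁) ℝ) 0 0
            (0 : Matrix (Fin n₂) (Fin n₂) ℝ)) *ᵥ x =
          Sum.elim (fun i => x (Sum.inl i)) (0 : Fin n₂ → ℝ) := by
        ext (i|i) <;> simp [mulVec, dotProduct, Fintype.sum_sum_type, fromBlocks_apply₁₁, fromBlocks_apply₁₂, fromBlocks_apply₂₁, fromBlocks_apply₂₂, Matrix.one_apply]
      rw [smul_mulVec, hmv, dotProduct_smul]
      simp only [dotProduct, RCLike.star_def, smul_eq_mul]
      rw [Fintype.sum_sum_type]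
      simp only [Sum.elim_inl, Sum.elim_inr, Pi.zero_apply, mul_zero, Finset.sum_const_zero,
        add_zero]
      apply mul_nonneg (by linarith)
      exact Finset.sum_nonneg fun i _ => by simpa using mul_self_nonneg (x (Sum.inl i))
  have key : Matrix.fromBlocks A B Bᵀ C - (κ + η) • (1 : Matrix (Fin n₁ ⊕ Fin n₂) (Fin n₁ ⊕ Fin n₂) ℝ)
      = fromBlocks A' B Bᵀ (C - (κ + η) • 1) +
        (-η) • fromBlocks (1 : Matrix (Fin n₁) (Fin n₁) ℝ) 0 0 (0 : Matrix (Fin n₂) (Fin n₂) ℝ) := by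
    rw [← fromBlocks_one, hA']
    ext (i|i) (j|j) <;>
      simp only [Matrix.sub_apply, Matrix.add_apply, Matrix.smul_apply, fromBlocks_apply₁₁,
        fromBlocks_apply₁₂, fromBlocks_apply₂₁, fromBlocks_apply₂₂, Matrix.one_apply,
        Matrix.zero_apply, smul_eq_mul] <;> first | (split_ifs <;> ring) | ring
  rw [key]
  exact hM1.add hP
end
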